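/- Let X be an abelian Polish group, let A ⊆ X be a meager Borel set belonging to F(X) (i.e., for every compact set K ⊆ X there exists x ∈ X with K + x ⊆ A), and let C ⊆ ℝ be a comeager Borel set of Lebesgue measure zero. Then the set T := C × A is Haar null and meager, but not Haar meager, in the abelian Polish group ℝ × X. -/

import Mathlib

open MeasureTheory Set

/-- A set in a topological abelian group is *Haar meager* if there is a Borel set `B ⊇ A`,
a nonempty compact metric space `K` and a continuous `f : K → G` such that `f ⁻¹' (B + x)`
is meager in `K` for every `x ∈ G`. -/
def IsHaarMeager {G : Type*} [TopologicalSpace G] [AddCommGroup G] (A : Set G) : Prop :=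
  ∃ B : Set G, A ⊆ B ∧ MeasurableSet[borel G] B ∧
    ∃ (K : Type) (_ : MetricSpace K) (_ : CompactSpace K) (_ : Nonempty K) (f : K → G),
      Continuous f ∧ ∀ x : G, IsMeagre (f ⁻¹' ((fun b => b + x) '' B))

/-- A set in a topological abelian group is *Haar null* if there is a Borel probability
measure `μ` and a Borel set `B ⊇ A` with `μ (x + B) = 0` for every `x ∈ G`. -/
def IsHaarNull {G : Type*} [TopologicalSpace G] [AddCommGroup G] (A : Set G) : Prop :=
  ∃ μ : @Measure G (borel G), @IsProbabilityMeasure G (borel G) μ ∧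
    ∃ B : Set G, A ⊆ B ∧ MeasurableSet[borel G] B ∧
      ∀ x : G, μ ((fun b => x + b) '' B) = 0

theorem part1 {X : Type*}
    [TopologicalSpace X] [AddCommGroup X] [IsTopologicalAddGroup X] [PolishSpace X]
    (A : Set X) (hA : MeasurableSet[borel X] A)
    (C : Set ℝ) (hC : MeasurableSet[borel ℝ] C)
    (hC0 : volume C = 0) :
    IsHaarNull (C ×ˢ A) := by
  letI := borel X
  haveI : BorelSpace X := ⟨rfl⟩
  unfold IsHaarNull
  rw [show borel (ℝ × X) = Prod.instMeasurableSpace from BorelSpace.measurable_eq.symm]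
  rw [show borel ℝ = Real.measurableSpace from BorelSpace.measurable_eq.symm] at hC
  have hg : Measurable (fun r : ℝ => (r, (0:X))) := measurable_id.prodMk measurable_const
  refine ⟨Measure.map (fun r : ℝ => (r, (0:X))) (volume.restrict (Icc 0 1)), ?_, C ×ˢ A,
    subset_rfl, hC.prod hA, ?_⟩
  · have : IsProbabilityMeasure (volume.restrict (Icc (0:ℝ) 1)) := by
      constructor
      rw [Measure.restrict_apply_univ, Real.volume_Icc]
      norm_num
    exact Measure.isProbabilityMeasure_map hg.aemeasurable
  · intro x
    have himg : (fun b => x + b) '' (C ×ˢ A) = (fun b => -x + b) ⁻¹' (C ×ˢ A) := by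
      ext b
      constructor
      · rintro ⟨c, hc, rfl⟩; simpa using hc
      · intro hb; exact ⟨-x + b, hb, add_neg_cancel_left x b⟩
    rw [himg, Measure.map_apply hg ((measurable_const_add _) (hC.prod hA))]
    have h0 : volume.restrict (Icc (0:ℝ) 1) ((fun r : ℝ => -x.1 + r) ⁻¹' C) = 0 := by
      refine le_antisymm (le_trans (Measure.restrict_le_self _) ?_) (by simp)
      rw [measure_preimage_add]; exact le_of_eq hC0
    exact measure_mono_null (fun r hr => (Set.mem_prod.mp hr).1) h0

theorem part2 {X : Type*} [TopologicalSpace X]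
    (A : Set X) (hAme : IsMeagre A) (C : Set ℝ) : IsMeagre (C ×ˢ A) := by
  obtain ⟨S, hS, hSc, hsub⟩ := isMeagre_iff_countable_union_isNowhereDense.mp hAme
  rw [isMeagre_iff_countable_union_isNowhereDense]
  refine ⟨(fun t => (univ : Set ℝ) ×ˢ t) '' S, ?_, hSc.image _, ?_⟩
  · rintro _ ⟨t, ht, rfl⟩
    have h1 : interior (closure t) = ∅ := hS t ht
    rw [IsNowhereDense, closure_prod_eq, interior_prod_eq, h1]
    simp
  · intro p hp
    obtain ⟨t, ht, hpt⟩ := hsub hp.2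
    exact ⟨univ ×ˢ t, ⟨t, ht, rfl⟩, ⟨mem_univ _, hpt⟩⟩

lemma isMeagre_iUnion' {ι α : Type*} [TopologicalSpace α] [Countable ι] {s : ι → Set α}
    (hs : ∀ i, IsMeagre (s i)) : IsMeagre (⋃ i, s i) := by
  rw [IsMeagre, compl_iUnion]; exact countable_iInter_mem.mpr hs

lemma IsNowhereDense.isMeagre' {α : Type*} [TopologicalSpace α] {s : Set α}
    (h : IsNowhereDense s) : IsMeagre s :=
  isMeagre_iff_countable_union_isNowhereDense.mpr
    ⟨{s}, by simpa using h, countable_singleton _, by simp⟩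

lemma IsNowhereDense.preimage_homeo {α β : Type*} [TopologicalSpace α] [TopologicalSpace β]
    (h : α ≃ₜ β) {s : Set β} (hs : IsNowhereDense s) : IsNowhereDense (h ⁻¹' s) := by
  rw [IsNowhereDense, ← h.preimage_closure, ← h.preimage_interior, hs, preimage_empty]

theorem part3 {X : Type*} [TopologicalSpace X] [AddCommGroup X] [IsTopologicalAddGroup X]
    [PolishSpace X] (A : Set X)
    (hAF : ∀ K : Set X, IsCompact K → ∃ x : X, (fun k => k + x) '' K ⊆ A)
    (C : Set ℝ) (hCco : IsMeagre Cᶜ) :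
    ¬ IsHaarMeager (C ×ˢ A) := by
  rintro ⟨B, hTB, -, K, _, _, _, f, hf, hmeag⟩
  set f₁ : K → ℝ := fun k => (f k).1 with hf₁def
  set f₂ : K → X := fun k => (f k).2 with hf₂def
  have hf₁c : Continuous f₁ := continuous_fst.comp hf
  have hf₂c : Continuous f₂ := continuous_snd.comp hf
  obtain ⟨x₀, hx₀⟩ := hAF (f₂ '' univ) (isCompact_univ.image hf₂c)
  obtain ⟨S, hS, hSc, hsub⟩ := isMeagre_iff_countable_union_isNowhereDense.mp hCco
  haveI := hSc.to_subtype
  set 𝔅 := TopologicalSpace.countableBasis K with h𝔅def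
  have h𝔅 : TopologicalSpace.IsTopologicalBasis 𝔅 := TopologicalSpace.isBasis_countableBasis K
  haveI : Countable 𝔅 := (TopologicalSpace.countable_countableBasis K).to_subtype
  set bad : Set ℝ := ⋃ (s : S) (U : 𝔅),
    {t : ℝ | (U : Set K).Nonempty ∧ ∀ k ∈ (U : Set K), f₁ k - t ∈ closure (s : Set ℝ)} with hbaddef
  have hbad : IsMeagre bad := by
    refine isMeagre_iUnion' fun s => isMeagre_iUnion' fun U => ?_
    by_cases hU : (U : Set K).Nonempty
    · obtain ⟨k₀, hk₀⟩ := hU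
      have hnd : IsNowhereDense ((Homeomorph.subLeft (f₁ k₀)) ⁻¹' closure (s : Set ℝ)) :=
        ((hS s s.2).closure).preimage_homeo _
      exact hnd.isMeagre'.mono (fun t ht => ht.2 k₀ hk₀)
    · have : {t : ℝ | (U : Set K).Nonempty ∧ ∀ k ∈ (U : Set K), f₁ k - t ∈ closure (s : Set ℝ)}
          = ∅ := eq_empty_iff_forall_notMem.mpr fun t ht => hU ht.1
      rw [this]; exact IsMeagre.empty
  obtain ⟨t, ht⟩ := (dense_of_mem_residual hbad).nonempty
  rw [mem_compl_iff] at ht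
  -- the good comeager set
  set G : Set K := {k | f₁ k - t ∈ C} with hGdef
  have hGc : IsMeagre Gᶜ := by
    have hsub2 : Gᶜ ⊆ ⋃ (s : S), (fun k => f₁ k - t) ⁻¹' closure (s : Set ℝ) := by
      intro k hk
      obtain ⟨s, hsS, hks⟩ := hsub hk
      exact mem_iUnion.mpr ⟨⟨s, hsS⟩, subset_closure hks⟩
    refine (isMeagre_iUnion' fun s => ?_).mono hsub2
    have hcl : IsClosed ((fun k => f₁ k - t) ⁻¹' closure (s : Set ℝ)) :=
      isClosed_closure.preimage (hf₁c.sub continuous_const)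
    refine (hcl.isNowhereDense_iff.mpr ?_).isMeagre'
    rw [eq_empty_iff_forall_notMem]
    intro k₁ hk₁
    obtain ⟨U, hU𝔅, hk₁U, hUsub⟩ :=
      h𝔅.exists_subset_of_mem_open hk₁ isOpen_interior
    refine ht (mem_iUnion.mpr ⟨s, mem_iUnion.mpr ⟨⟨U, hU𝔅⟩, ⟨k₁, hk₁U⟩, fun k hk =>
      show k ∈ (fun k' => f₁ k' - t) ⁻¹' closure (s : Set ℝ) from interior_subset (hUsub hk)⟩⟩)
  have hGM : G ⊆ f ⁻¹' ((fun b => b + ((t, -x₀) : ℝ × X)) '' B) := by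
    intro k hk
    refine ⟨(f₁ k - t, f₂ k + x₀), hTB ⟨hk, hx₀ ⟨f₂ k, ⟨k, mem_univ k, rfl⟩, rfl⟩⟩, ?_⟩
    exact Prod.ext (sub_add_cancel _ _) (add_neg_cancel_right _ _)
  have hM := hmeag (t, -x₀)
  have hMres : f ⁻¹' ((fun b => b + ((t, -x₀) : ℝ × X)) '' B) ∈ residual K := by
    have : G ∈ residual K := by rwa [IsMeagre, compl_compl] at hGc
    exact Filter.mem_of_superset this hGM
  have hEmpty : (∅ : Set K) ∈ residual K := by
    have := Filter.inter_mem hM hMres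
    rwa [compl_inter_self] at this
  exact absurd (dense_of_mem_residual hEmpty).nonempty (by simp)


/-- If `A ⊆ X` is a meager Borel set such that every compact set admits a translate
inside `A`, and `C ⊆ ℝ` is a comeager Borel set of Lebesgue measure zero, then
`T := C × A` is Haar null and meager, but not Haar meager, in `ℝ × X`. -/
theorem haarNull_meager_not_haarMeager {X : Type*}
    [TopologicalSpace X] [AddCommGroup X] [IsTopologicalAddGroup X] [PolishSpace X]
    (A : Set X) (hA : MeasurableSet[borel X] A) (hAme : IsMeagre A)
    (hAF : ∀ K : Set X, IsCompact K → ∃ x : X, (fun k => k + x) '' K ⊆ A)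
    (C : Set ℝ) (hC : MeasurableSet[borel ℝ] C) (hCco : IsMeagre Cᶜ)
    (hC0 : volume C = 0) :
    IsHaarNull (C ×ˢ A) ∧ IsMeagre (C ×ˢ A) ∧ ¬ IsHaarMeager (C ×ˢ A) :=
  ⟨part1 A hA C hC hC0, part2 A hAme C, part3 A hAF C hCco⟩
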